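/- Let (X, 𝓑, μ, f) be a measure-preserving system with μ ergodic, and {E_n} a decreasing (in n) sequence of measurable sets with μ(E_n) → 0. Then the set H_r of points x such that f^k(x) ∈ E_n for at least r values of k in {1,...,n}, for infinitely many n, has measure 0 or 1. -/

import Mathlib

open MeasureTheory Filter

theorem stmt1 {X : Type*} [MeasurableSpace X] (μ : Measure X) [IsProbabilityMeasure μ]
    (f : X → X) (hf : MeasurePreserving f μ μ) (herg : Ergodic f μ)
    (E : ℕ → Set X) (hmeas : ∀ n, MeasurableSet (E n))
    (hmono : ∀ n₁ n₂, n₂ ≤ n₁ → E n₁ ⊆ E n₂)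
    (hlim : Tendsto (fun n => μ (E n)) atTop (nhds 0))
    (r : ℕ) (hr : 1 ≤ r) :
    μ (⋂ m, ⋃ n, ⋃ (_ : m ≤ n),
        {x | r ≤ Set.ncard {k | 1 ≤ k ∧ k ≤ n ∧ f^[k] x ∈ E n}}) = 0 ∨
    μ (⋂ m, ⋃ n, ⋃ (_ : m ≤ n),
        {x | r ≤ Set.ncard {k | 1 ≤ k ∧ k ≤ n ∧ f^[k] x ∈ E n}}) = 1 := by
  classical
  set H := ⋂ m, ⋃ n, ⋃ (_ : m ≤ n),
      {x | r ≤ Set.ncard {k | 1 ≤ k ∧ k ≤ n ∧ f^[k] x ∈ E n}} with hH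
  -- the counting sets as finsets
  have hset : ∀ n (x : X), {k | 1 ≤ k ∧ k ≤ n ∧ f^[k] x ∈ E n}
      = ↑((Finset.Icc 1 n).filter fun k => f^[k] x ∈ E n) := by
    intro n x; ext k
    simp [Finset.mem_Icc, and_assoc]
  -- measurability of H
  have hHmeas : MeasurableSet H := by
    rw [hH]
    refine MeasurableSet.iInter fun m => MeasurableSet.iUnion fun n =>
      MeasurableSet.iUnion fun _ => ?_
    have hcount : Measurable fun x =>
        ((Finset.Icc 1 n).filter fun k => f^[k] x ∈ E n).card := by
      simp_rw [Finset.card_filter]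
      exact Finset.measurable_sum _ fun k _ =>
        Measurable.ite ((hf.measurable.iterate k) (hmeas n)) measurable_const measurable_const
    have heq : {x | r ≤ Set.ncard {k | 1 ≤ k ∧ k ≤ n ∧ f^[k] x ∈ E n}}
        = (fun x => ((Finset.Icc 1 n).filter fun k => f^[k] x ∈ E n).card) ⁻¹' Set.Ici r := by
      ext x
      simp only [Set.mem_setOf_eq, Set.mem_preimage, Set.mem_Ici, hset n x,
        Set.ncard_coe_finset]
    rw [heq]
    exact hcount measurableSet_Ici
  -- the tail set is null
  have hC : μ (f ⁻¹' ⋂ n, E n) = 0 := by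
    rw [hf.measure_preimage (MeasurableSet.iInter hmeas).nullMeasurableSet]
    refine le_antisymm ?_ zero_le
    exact ge_of_tendsto' hlim fun n => measure_mono (Set.iInter_subset E n)
  -- membership characterization
  have hmemH : ∀ x : X, x ∈ H ↔ ∀ m, ∃ n, m ≤ n ∧
      r ≤ Set.ncard {k | 1 ≤ k ∧ k ≤ n ∧ f^[k] x ∈ E n} := by
    intro x
    simp only [hH, Set.mem_iInter, Set.mem_iUnion, Set.mem_setOf_eq, exists_prop]
  -- key pointwise statement
  have hkey : ∀ x : X, x ∈ H → f x ∉ ⋂ n, E n → f x ∈ H := by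
    intro x hx hfx
    rw [Set.mem_iInter] at hfx
    push_neg at hfx
    obtain ⟨N, hN⟩ := hfx
    rw [hmemH] at hx ⊢
    intro m
    obtain ⟨n, hn, hcard⟩ := hx (max (m + 1) (N + 1))
    have hnm : m + 1 ≤ n := le_trans (le_max_left _ _) hn
    have hnN : N + 1 ≤ n := le_trans (le_max_right _ _) hn
    refine ⟨n - 1, by omega, ?_⟩
    have hfxn : f x ∉ E n := fun h => hN (hmono n N (by omega) h)
    set A := {k | 1 ≤ k ∧ k ≤ n ∧ f^[k] x ∈ E n} with hA
    have hBfin : {k | 1 ≤ k ∧ k ≤ n - 1 ∧ f^[k] (f x) ∈ E (n - 1)}.Finite :=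
      Set.Finite.subset (Set.finite_Icc 1 (n - 1))
        (fun k hk => Set.mem_Icc.2 ⟨hk.1, hk.2.1⟩)
    have himg : (fun k => k - 1) '' A ⊆
        {k | 1 ≤ k ∧ k ≤ n - 1 ∧ f^[k] (f x) ∈ E (n - 1)} := by
      rintro j ⟨k, ⟨hk1, hk2, hk3⟩, rfl⟩
      show 1 ≤ k - 1 ∧ k - 1 ≤ n - 1 ∧ f^[k - 1] (f x) ∈ E (n - 1)
      have hk2' : 2 ≤ k := by
        by_contra h
        have hk : k = 1 := by omega
        subst hk
        simp only [Function.iterate_one] at hk3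
        exact hfxn hk3
      refine ⟨by omega, by omega, ?_⟩
      have hit : f^[k - 1] (f x) = f^[k] x := by
        conv_rhs => rw [show k = (k - 1) + 1 by omega]
        rw [Function.iterate_succ_apply]
      rw [hit]
      exact hmono n (n - 1) (by omega) hk3
    have hinj : Set.InjOn (fun k => k - 1) A := by
      intro a ha b hb hab
      have ha1 : 1 ≤ a := ha.1
      have hb1 : 1 ≤ b := hb.1
      have hab' : a - 1 = b - 1 := hab
      omega
    calc r ≤ A.ncard := hcard
      _ = ((fun k => k - 1) '' A).ncard := (Set.ncard_image_of_injOn hinj).symm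
      _ ≤ _ := Set.ncard_le_ncard himg hBfin
  -- H is a.e. invariant
  have hle : H ≤ᵐ[μ] f ⁻¹' H := by
    rw [ae_le_set]
    refine measure_mono_null ?_ hC
    rintro x ⟨hx, hx'⟩
    by_contra h
    exact hx' (hkey x hx h)
  rcases herg.ae_empty_or_univ_of_ae_le_preimage hHmeas.nullMeasurableSet hle with h | h
  · left
    rw [measure_congr h, measure_empty]
  · right
    rw [measure_congr h, measure_univ]
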